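/- For a Poisson random variable Z with mean μ ≤ 1, there exists a constant C' > 0 such that for all integers p ≥ 2, E|Z - μ|^p ≤ C' μ (p/2)^p. -/

import Mathlib

open ProbabilityTheory Real

lemma factorial_le_four_mul_half_pow : ∀ p : ℕ, 1 ≤ p →
    (p.factorial : ℝ) ≤ 4 * ((p : ℝ) / 2) ^ p := by
  intro p hp
  induction p, hp using Nat.le_induction with
  | base => norm_num
  | succ n hn ih =>
    have hn0 : (0 : ℝ) < n := by exact_mod_cast hn
    have hbern : (2 : ℝ) ≤ (1 + 1 / (n : ℝ)) ^ n := by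
      have hinv : (0:ℝ) ≤ 1 / (n : ℝ) := by positivity
      have h := one_add_mul_le_pow (a := 1 / (n : ℝ)) (by linarith) n
      have heq : (n : ℝ) * (1 / n) = 1 := by field_simp
      linarith
    have hsplit : ((n : ℝ) + 1) / 2 = (1 + 1 / (n : ℝ)) * ((n : ℝ) / 2) := by
      field_simp
    have key : 2 * ((n : ℝ) / 2) ^ n ≤ (((n : ℝ) + 1) / 2) ^ n := by
      rw [hsplit, mul_pow]
      exact mul_le_mul_of_nonneg_right hbern (by positivity)
    have hfac : ((n + 1).factorial : ℝ) = ((n : ℝ) + 1) * n.factorial := by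
      rw [Nat.factorial_succ]; push_cast; ring
    have hmain : ((n + 1).factorial : ℝ) ≤ 4 * (((n : ℝ) + 1) / 2) ^ (n + 1) := by
      calc ((n + 1).factorial : ℝ) = ((n : ℝ) + 1) * n.factorial := hfac
        _ ≤ ((n : ℝ) + 1) * (4 * ((n : ℝ) / 2) ^ n) := by
            exact mul_le_mul_of_nonneg_left ih (by positivity)
        _ = 2 * ((n : ℝ) + 1) * (2 * ((n : ℝ) / 2) ^ n) := by ring
        _ ≤ 2 * ((n : ℝ) + 1) * ((((n : ℝ) + 1) / 2) ^ n) := by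
            exact mul_le_mul_of_nonneg_left key (by positivity)
        _ = 4 * (((n : ℝ) + 1) / 2) ^ (n + 1) := by rw [pow_succ]; ring
    convert hmain using 3
    push_cast; ring

/-- For `Z ~ Poisson(μ)` with `μ ≤ 1`, there is a universal constant `C' > 0` such that
for all integers `p ≥ 2`, `E|Z - μ|^p ≤ C' μ (p/2)^p`. -/
theorem poisson_moment_growth' :
    ∃ C' : ℝ, 0 < C' ∧ ∀ (μ : NNReal), μ ≤ 1 → ∀ p : ℕ, 2 ≤ p →
      (∑' z : ℕ, poissonPMFReal μ z * |(z : ℝ) - (μ : ℝ)| ^ p) ≤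
        C' * (μ : ℝ) * ((p : ℝ) / 2) ^ p := by
  refine ⟨100, by norm_num, fun μ hμ p hp => ?_⟩
  have hμ0 : (0 : ℝ) ≤ μ := μ.coe_nonneg
  have hμ1 : (μ : ℝ) ≤ 1 := by exact_mod_cast hμ
  set f : ℕ → ℝ := fun z => poissonPMFReal μ z * |(z : ℝ) - (μ : ℝ)| ^ p with hf
  set g : ℕ → ℝ := fun z => ((μ : ℝ) * p.factorial) * (Real.exp 1 ^ z / z.factorial) with hg
  have hfg : ∀ z, f z ≤ g z := by
    intro z
    have hfz : f z = Real.exp (-(μ : ℝ)) * (μ : ℝ) ^ z / z.factorial *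
        |(z : ℝ) - (μ : ℝ)| ^ p := rfl
    have hgz : g z = ((μ : ℝ) * p.factorial) * (Real.exp 1 ^ z / z.factorial) := rfl
    have hfz0 : (0:ℝ) < z.factorial := by exact_mod_cast z.factorial_pos
    have he : Real.exp (-(μ : ℝ)) ≤ 1 := by rw [Real.exp_le_one_iff]; linarith
    have hpf1 : (1:ℝ) ≤ p.factorial := by exact_mod_cast p.factorial_pos
    have hexp : Real.exp (z : ℝ) = Real.exp 1 ^ z := by
      rw [← Real.exp_nat_mul]; norm_num
    rcases Nat.eq_zero_or_pos z with hz | hz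
    · subst hz
      rw [hfz, hgz]
      simp only [Nat.cast_zero, zero_sub, abs_neg, abs_of_nonneg hμ0, pow_zero,
        Nat.factorial_zero, Nat.cast_one, div_one, mul_one, one_mul]
      have h2 : (μ : ℝ) ^ p ≤ (μ : ℝ) := by
        calc (μ : ℝ) ^ p ≤ (μ : ℝ) ^ 1 := pow_le_pow_of_le_one hμ0 hμ1 (by omega)
          _ = μ := pow_one _
      nlinarith [Real.exp_pos (-(μ:ℝ)), pow_nonneg hμ0 p]
    · have hz1 : (1 : ℝ) ≤ z := by exact_mod_cast hz
      have habs : |(z : ℝ) - (μ : ℝ)| ≤ (z : ℝ) := by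
        rw [abs_of_nonneg (by linarith)]; linarith
      have habsp : |(z : ℝ) - (μ : ℝ)| ^ p ≤ (z : ℝ) ^ p :=
        pow_le_pow_left₀ (abs_nonneg _) habs p
      have hB : |(z : ℝ) - (μ : ℝ)| ^ p ≤ (p.factorial : ℝ) * Real.exp 1 ^ z := by
        have hzp : (z : ℝ) ^ p ≤ p.factorial * Real.exp z := by
          have h := Real.pow_div_factorial_le_exp (x := (z : ℝ)) (by positivity) p
          rw [div_le_iff₀ (by positivity)] at h
          linarith
        calc |(z : ℝ) - (μ : ℝ)| ^ p ≤ (z : ℝ) ^ p := habsp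
          _ ≤ p.factorial * Real.exp z := hzp
          _ = p.factorial * Real.exp 1 ^ z := by rw [hexp]
      have hA : Real.exp (-(μ : ℝ)) * (μ : ℝ) ^ z ≤ (μ : ℝ) := by
        have hmuz : (μ : ℝ) ^ z ≤ (μ : ℝ) := by
          calc (μ : ℝ) ^ z ≤ (μ : ℝ) ^ 1 := pow_le_pow_of_le_one hμ0 hμ1 hz
            _ = μ := pow_one _
        nlinarith [Real.exp_pos (-(μ:ℝ)), pow_nonneg hμ0 z]
      rw [hfz, hgz]
      calc Real.exp (-(μ : ℝ)) * (μ : ℝ) ^ z / z.factorial * |(z : ℝ) - (μ : ℝ)| ^ p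
          = (Real.exp (-(μ : ℝ)) * (μ : ℝ) ^ z * |(z : ℝ) - (μ : ℝ)| ^ p) / z.factorial := by
            ring
        _ ≤ ((μ : ℝ) * ((p.factorial : ℝ) * Real.exp 1 ^ z)) / z.factorial := by
            have hnum := mul_le_mul hA hB (by positivity) hμ0
            gcongr
        _ = ((μ : ℝ) * p.factorial) * (Real.exp 1 ^ z / z.factorial) := by ring
  have hgsum : Summable g := by
    apply Summable.mul_left
    exact Real.summable_pow_div_factorial (Real.exp 1)
  have hf0 : ∀ z, 0 ≤ f z := fun z =>
    mul_nonneg ProbabilityTheory.poissonPMFReal_nonneg (by positivity)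
  have hfsum : Summable f := Summable.of_nonneg_of_le hf0 hfg hgsum
  have h1 : (∑' z, f z) ≤ ∑' z, g z := Summable.tsum_le_tsum hfg hfsum hgsum
  have h2 : (∑' z, g z) = ((μ : ℝ) * p.factorial) * ∑' z, (Real.exp 1 ^ z / z.factorial : ℝ) :=
    tsum_mul_left
  have h3 : (∑' z : ℕ, (Real.exp 1 ^ z / z.factorial : ℝ)) ≤ Real.exp (Real.exp 1) := by
    apply tsum_le_of_sum_range_le (fun z => by positivity)
    intro n
    exact Real.sum_le_exp_of_nonneg (Real.exp_pos 1).le n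
  have hexp3 : Real.exp (Real.exp 1) ≤ 25 := by
    have he1 : Real.exp 1 ≤ 3 := by linarith [Real.exp_one_lt_d9]
    have ha : Real.exp (Real.exp 1) ≤ Real.exp 3 := Real.exp_le_exp.mpr he1
    have hb : Real.exp 3 = Real.exp 1 ^ 3 := by
      rw [← Real.exp_nat_mul]; norm_num
    have hc : Real.exp 1 ^ 3 < 2.7182818286 ^ 3 :=
      pow_lt_pow_left₀ Real.exp_one_lt_d9 (Real.exp_pos 1).le (by norm_num)
    have hd : (2.7182818286 : ℝ) ^ 3 ≤ 25 := by norm_num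
    linarith
  have hfac : (p.factorial : ℝ) ≤ 4 * ((p : ℝ) / 2) ^ p :=
    factorial_le_four_mul_half_pow p (by omega)
  calc (∑' z, f z) ≤ ((μ : ℝ) * p.factorial) * ∑' z, (Real.exp 1 ^ z / z.factorial : ℝ) := by
        rw [← h2]; exact h1
    _ ≤ ((μ : ℝ) * p.factorial) * Real.exp (Real.exp 1) := by
        apply mul_le_mul_of_nonneg_left h3
        positivity
    _ ≤ ((μ : ℝ) * (4 * ((p : ℝ) / 2) ^ p)) * 25 := by
        have hA : ((μ : ℝ) * p.factorial) ≤ (μ : ℝ) * (4 * ((p : ℝ) / 2) ^ p) :=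
          mul_le_mul_of_nonneg_left hfac hμ0
        have hB : (0:ℝ) ≤ (μ : ℝ) * p.factorial := by positivity
        nlinarith [Real.exp_pos (Real.exp 1)]
    _ = 100 * (μ : ℝ) * ((p : ℝ) / 2) ^ p := by ring
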